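/- Fix a subset I ⊆ {1,…,n} and, for each i ∈ I, a positive divisor d_i of p_i; set p'_i := p_i/d_i, let L' := L((p'_i)_{i∈I}) be the abelian group with generators e'_i (i ∈ I) and relations p'_i e'_i all equal, with c' the common value, and let S' := ℂ[t_0,t_1,(x'_i)_{i∈I}]/((x'_i)^{p'_i} − ℓ_i(t_0,t_1) : i ∈ I) with its L'-grading (deg x'_i := e'_i, deg t_0 = deg t_1 := c'). Then: (1) there is an injective group homomorphism ι: L' → L with ι(e'_i) = d_i e_i for all i ∈ I and ι(c') = c; (2) there is an injective ℂ-algebra homomorphism f: S' → S with f(x'_i) = x_i^{d_i} for i ∈ I and f(t_j) = t_j for j = 0,1, and f maps the homogeneous component S'_y bijectively onto S_{ι(y)} for every y ∈ L'; (3) if x ∈ L has normal form x = ∑_{i∈I} a_i e_i + a c with d_i dividing a_i for all i ∈ I (and coefficient 0 at all e_i with i ∉ I), then, setting x' := ∑_{i∈I} (a_i/d_i) e'_i + a c' ∈ L', the map f restricts to an isomorphism of the Veronese subrings (S')^{x'} ≅ S^x, sending (S')^{x'} onto S^x and respecting the ℤ-gradings. -/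

import Mathlib

set_option synthInstance.maxHeartbeats 1000000
set_option maxHeartbeats 1000000
noncomputable section

open MvPolynomial

def LRel (ι : Type) [DecidableEq ι] (p : ι → ℕ) : AddSubgroup (Option ι → ℤ) :=
  AddSubgroup.closure
    { v | ∃ i : ι, v = (p i : ℤ) • Pi.single (some i) 1 - Pi.single (none : Option ι) 1 }

abbrev LGroup (ι : Type) [DecidableEq ι] (p : ι → ℕ) : Type :=
  (Option ι → ℤ) ⧸ LRel ι p

def egen {ι : Type} [DecidableEq ι] (p : ι → ℕ) (i : ι) : LGroup ι p :=
  QuotientAddGroup.mk (Pi.single (some i) 1)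

def cgen {ι : Type} [DecidableEq ι] (p : ι → ℕ) : LGroup ι p :=
  QuotientAddGroup.mk (Pi.single (none : Option ι) 1)

def Lplus {ι : Type} [DecidableEq ι] (p : ι → ℕ) : AddSubmonoid (LGroup ι p) :=
  AddSubmonoid.closure (Set.range (egen p))

abbrev SPoly (ι : Type) : Type := MvPolynomial (ι ⊕ Fin 2) ℂ

def SIdl (ι : Type) (p : ι → ℕ) (c0 c1 : ι → ℂ) : Ideal (SPoly ι) :=
  Ideal.span { f | ∃ i : ι,
    f = X (Sum.inl i) ^ (p i) - (C (c0 i) * X (Sum.inr 0) + C (c1 i) * X (Sum.inr 1)) }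

abbrev SAlg (ι : Type) (p : ι → ℕ) (c0 c1 : ι → ℂ) : Type := SPoly ι ⧸ SIdl ι p c0 c1

def wtA {ι : Type} [Fintype ι] [DecidableEq ι] (p : ι → ℕ) (m : (ι ⊕ Fin 2) →₀ ℕ) :
    LGroup ι p :=
  (∑ i : ι, m (Sum.inl i) • egen p i) + (m (Sum.inr 0) + m (Sum.inr 1)) • cgen p

def polyCompA {ι : Type} [Fintype ι] [DecidableEq ι] (p : ι → ℕ) (y : LGroup ι p) :
    Submodule ℂ (SPoly ι) where
  carrier := { f | ∀ m, coeff m f ≠ 0 → wtA p m = y }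
  add_mem' := by
    intro f g hf hg m hm
    by_cases h : coeff m f = 0
    · refine hg m fun h' => hm ?_
      simp [coeff_add, h, h']
    · exact hf m h
  zero_mem' := by
    intro m hm
    simp at hm
  smul_mem' := by
    intro c f hf m hm
    refine hf m fun h => hm ?_
    simp [coeff_smul, h]

def SCompA {ι : Type} [Fintype ι] [DecidableEq ι] (p : ι → ℕ) (c0 c1 : ι → ℂ)
    (y : LGroup ι p) : Submodule ℂ (SAlg ι p c0 c1) :=
  (polyCompA p y).map (Ideal.Quotient.mkₐ ℂ (SIdl ι p c0 c1)).toLinearMap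

def SVerA {ι : Type} [Fintype ι] [DecidableEq ι] (p : ι → ℕ) (c0 c1 : ι → ℂ)
    (x : LGroup ι p) : Submodule ℂ (SAlg ι p c0 c1) :=
  ⨆ k : ℤ, SCompA p c0 c1 (k • x)

def SShiftA {ι : Type} [Fintype ι] [DecidableEq ι] (p : ι → ℕ) (c0 c1 : ι → ℂ)
    (y x : LGroup ι p) : Submodule ℂ (SAlg ι p c0 c1) :=
  ⨆ k : ℤ, SCompA p c0 c1 (y + k • x)

/-- Restriction of the weight data `p` to the subset `I`, dividing by `d`. -/
def pRes {n : ℕ} (p d : Fin n → ℕ) (I : Finset (Fin n)) : ↥I → ℕ :=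
  fun i => p i.1 / d i.1

/-- Restriction of a family of scalars to the subset `I`. -/
def cRes {n : ℕ} (c : Fin n → ℂ) (I : Finset (Fin n)) : ↥I → ℂ :=
  fun i => c i.1

set_option linter.unusedSectionVars false

section Lgroup

variable {ι : Type} [Fintype ι] [DecidableEq ι] (p : ι → ℕ)

/-- The quotient map as an `AddMonoidHom`. -/
def mkL : (Option ι → ℤ) →+ LGroup ι p := QuotientAddGroup.mk' (LRel ι p)

lemma mkL_apply (v : Option ι → ℤ) : mkL p v = QuotientAddGroup.mk v := rfl

lemma egen_def (i : ι) : egen p i = mkL p (Pi.single (some i) 1) := rfl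
lemma cgen_def : cgen p = mkL p (Pi.single none 1) := rfl

lemma rel_gen_mem (i : ι) :
    ((p i : ℤ) • Pi.single (some i) 1 - Pi.single (none : Option ι) 1) ∈ LRel ι p :=
  AddSubgroup.subset_closure ⟨i, rfl⟩

lemma pe_eq_c (i : ι) : (p i : ℤ) • egen p i = cgen p := by
  rw [egen_def, cgen_def, ← map_zsmul]
  rw [← sub_eq_zero, ← map_sub]
  exact (QuotientAddGroup.eq_zero_iff _).2 (rel_gen_mem p i)

/-- The additive hom to `ℚ` recording the "total degree". -/
def qaux : (Option ι → ℤ) →+ ℚ where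
  toFun v := (∑ i : ι, (v (some i) : ℚ) / (p i : ℚ)) + (v none : ℚ)
  map_zero' := by simp
  map_add' v w := by
    simp only [Pi.add_apply, Int.cast_add, add_div, Finset.sum_add_distrib]
    ring

lemma qaux_apply (v : Option ι → ℤ) :
    qaux p v = (∑ i : ι, (v (some i) : ℚ) / (p i : ℚ)) + (v none : ℚ) := rfl

lemma qaux_single_none : qaux p (Pi.single (none : Option ι) 1) = 1 := by
  rw [qaux_apply]
  simp [Pi.single_apply]

lemma qaux_single_some (i : ι) :
    qaux p (Pi.single (some i) (1:ℤ)) = 1 / (p i : ℚ) := by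
  rw [qaux_apply]
  simp only [Pi.single_apply, Option.some.injEq]
  rw [Finset.sum_eq_single i]
  · simp
  · intro b _ hb
    simp [hb]
  · simp

variable (hp : ∀ i, p i ≠ 0)
include hp

lemma qaux_rel : ∀ v ∈ LRel ι p, qaux p v = 0 := by
  intro v hv
  induction hv using AddSubgroup.closure_induction with
  | mem v hv =>
    obtain ⟨i, rfl⟩ := hv
    rw [map_sub, map_zsmul, qaux_single_none, qaux_single_some]
    have : (p i : ℚ) ≠ 0 := by exact_mod_cast hp i
    rw [zsmul_eq_mul, Int.cast_natCast, mul_one_div_cancel this, sub_self]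
  | zero => simp
  | add x y _ _ hx hy => rw [map_add, hx, hy, add_zero]
  | neg x _ hx => rw [map_neg, hx, neg_zero]

/-- `qaux` descends to the quotient. -/
def qmap : LGroup ι p →+ ℚ :=
  QuotientAddGroup.lift (LRel ι p) (qaux p) (qaux_rel p hp)

lemma qmap_mk (v : Option ι → ℤ) : qmap p hp (mkL p v) = qaux p v := rfl

end Lgroup

section Zmap

variable {ι : Type} [Fintype ι] [DecidableEq ι] (p : ι → ℕ)

/-- The additive hom to `ZMod (p i)`. -/
def zaux (i : ι) : (Option ι → ℤ) →+ ZMod (p i) where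
  toFun v := (v (some i) : ZMod (p i))
  map_zero' := by simp
  map_add' v w := by push_cast; simp

lemma zaux_rel (i : ι) : ∀ v ∈ LRel ι p, zaux p i v = 0 := by
  intro v hv
  induction hv using AddSubgroup.closure_induction with
  | mem v hv =>
    obtain ⟨j, rfl⟩ := hv
    rw [map_sub, map_zsmul]
    have h1 : zaux p i (Pi.single (none : Option ι) (1:ℤ)) = 0 := by
      simp [zaux, Pi.single_apply]
    have h2 : zaux p i (Pi.single (some j) (1:ℤ)) = if i = j then 1 else 0 := by
      simp only [zaux, AddMonoidHom.coe_mk, ZeroHom.coe_mk, Pi.single_apply, Option.some.injEq]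
      by_cases h : i = j <;> simp [h]
    rw [h1, h2]
    by_cases h : i = j
    · subst h
      rw [if_pos rfl, zsmul_eq_mul, mul_one, sub_zero, Int.cast_natCast, ZMod.natCast_self]
    · rw [if_neg h, smul_zero, sub_zero]
  | zero => simp
  | add x y _ _ hx hy => rw [map_add, hx, hy, add_zero]
  | neg x _ hx => rw [map_neg, hx, neg_zero]

/-- `zaux` descends to the quotient. -/
def zmap (i : ι) : LGroup ι p →+ ZMod (p i) :=
  QuotientAddGroup.lift (LRel ι p) (zaux p i) (zaux_rel p i)

lemma zmap_mk (i : ι) (v : Option ι → ℤ) : zmap p i (mkL p v) = (v (some i) : ZMod (p i)) := rfl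

end Zmap
section Kernel

variable {ι : Type} [Fintype ι] [DecidableEq ι] (p : ι → ℕ)

lemma mkL_eq_sum (v : Option ι → ℤ) :
    mkL p v = (∑ i : ι, v (some i) • egen p i) + v none • cgen p := by
  have : v = (∑ i : ι, v (some i) • Pi.single (some i) (1:ℤ))
      + v none • Pi.single (none : Option ι) (1:ℤ) := by
    funext x
    cases x with
    | none =>
      simp only [Pi.add_apply, Finset.sum_apply, Pi.smul_apply, Pi.single_apply, smul_eq_mul]
      simp
    | some j =>
      simp only [Pi.add_apply, Finset.sum_apply, Pi.smul_apply, Pi.single_apply, smul_eq_mul,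
        Option.some.injEq]
      rw [Finset.sum_eq_single j (by intro b _ hb; simp [Ne.symm hb]) (by simp)]
      simp
  conv_lhs => rw [this]
  simp only [map_add, map_sum, map_zsmul]
  rfl

variable (hp : ∀ i, p i ≠ 0)
include hp

lemma mkL_eq_zero_iff (v : Option ι → ℤ) :
    mkL p v = 0 ↔ (∀ i, (p i : ℤ) ∣ v (some i)) ∧ qaux p v = 0 := by
  constructor
  · intro h
    constructor
    · intro i
      have := congrArg (zmap p i) h
      rw [zmap_mk, map_zero] at this
      exact (ZMod.intCast_zmod_eq_zero_iff_dvd _ _).1 this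
    · have := congrArg (qmap p hp) h
      rwa [qmap_mk, map_zero] at this
  · rintro ⟨hdvd, hq⟩
    have hv : v = ∑ i : ι, (v (some i) / (p i : ℤ)) •
        ((p i : ℤ) • Pi.single (some i) 1 - Pi.single (none : Option ι) 1) := by
      funext x
      cases x with
      | some j =>
        simp only [Finset.sum_apply, Pi.smul_apply, Pi.sub_apply, Pi.single_apply,
          Option.some.injEq, smul_eq_mul]
        rw [Finset.sum_eq_single j ?_ (by simp)]
        · simp only [if_pos rfl, if_pos trivial, reduceCtorEq, if_false, sub_zero, mul_one]
          exact (Int.ediv_mul_cancel (hdvd j)).symm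
        · intro b _ hb
          simp [Ne.symm hb]
      | none =>
        simp only [Finset.sum_apply, Pi.smul_apply, Pi.sub_apply, Pi.single_apply, smul_eq_mul]
        simp only [reduceCtorEq, if_false, if_pos rfl, zero_sub, mul_neg, mul_one]
        rw [qaux_apply] at hq
        have key : (∑ i : ι, (v (some i) / (p i : ℤ))) = - v none := by
          have : ((∑ i : ι, (v (some i) / (p i : ℤ)) : ℤ) : ℚ) = ((- v none : ℤ) : ℚ) := by
            push_cast
            rw [Finset.sum_congr rfl (fun i _ => Int.cast_div_charZero (k := ℚ) (hdvd i))]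
            push_cast
            linarith [hq]
          exact_mod_cast this
        simp [key]

    rw [mkL_apply, QuotientAddGroup.eq_zero_iff]
    rw [hv]
    exact AddSubgroup.sum_mem _ fun i _ =>
      AddSubgroup.zsmul_mem _ (rel_gen_mem p i) _

end Kernel
section Span

variable {ι : Type} [Fintype ι] [DecidableEq ι] (p : ι → ℕ) (c0 c1 : ι → ℂ)

lemma pe_eq_c' (i : ι) : (p i) • egen p i = cgen p := by
  have := pe_eq_c p i
  rwa [natCast_zsmul] at this

lemma wtA_step (m : (ι ⊕ Fin 2) →₀ ℕ) (i : ι) (h : p i ≤ m (Sum.inl i)) (j : Fin 2) :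
    wtA p (m - Finsupp.single (Sum.inl i) (p i) + Finsupp.single (Sum.inr j) 1) = wtA p m := by
  set M := m - Finsupp.single (Sum.inl i) (p i) + Finsupp.single (Sum.inr j) 1 with hM
  have hMl : ∀ k, M (Sum.inl k) = m (Sum.inl k) - (if i = k then p i else 0) := by
    intro k
    simp [hM, Finsupp.add_apply, Finsupp.tsub_apply, Finsupp.single_apply, Sum.inl.injEq]
  have hMr : M (Sum.inr 0) + M (Sum.inr 1) = (m (Sum.inr 0) + m (Sum.inr 1)) + 1 := by
    have h0 : ∀ j' : Fin 2, M (Sum.inr j') = m (Sum.inr j') + (if j = j' then 1 else 0) := by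
      intro j'
      simp [hM, Finsupp.add_apply, Finsupp.tsub_apply, Finsupp.single_apply, Sum.inr.injEq]
    rw [h0, h0]
    fin_cases j <;> simp <;> ring
  unfold wtA
  rw [hMr]
  have hsum : ∀ (f : ι → ℕ), (∑ k : ι, f k • egen p k) =
      (∑ k ∈ Finset.univ.erase i, f k • egen p k) + f i • egen p i := by
    intro f
    rw [Finset.sum_erase_add _ _ (Finset.mem_univ i)]
  rw [Finset.sum_congr rfl (fun k _ => by rw [hMl k]), hsum, hsum (fun k => m (Sum.inl k))]
  have herase : (∑ k ∈ Finset.univ.erase i, (m (Sum.inl k) - if i = k then p i else 0) • egen p k)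
      = ∑ k ∈ Finset.univ.erase i, m (Sum.inl k) • egen p k := by
    refine Finset.sum_congr rfl fun k hk => ?_
    rw [if_neg (Ne.symm (Finset.ne_of_mem_erase hk)), Nat.sub_zero]
  rw [herase, if_pos rfl]
  have key : (m (Sum.inl i) - p i) • egen p i + (m (Sum.inr 0) + m (Sum.inr 1) + 1) • cgen p
      = m (Sum.inl i) • egen p i + (m (Sum.inr 0) + m (Sum.inr 1)) • cgen p := by
    rw [add_nsmul _ _ 1, one_nsmul, ← pe_eq_c' p i]
    have : (m (Sum.inl i) - p i) • egen p i + p i • egen p i = m (Sum.inl i) • egen p i := by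
      rw [← add_nsmul, Nat.sub_add_cancel h]
    rw [← this]
    abel
  rw [add_assoc, add_assoc, ← add_assoc (m (Sum.inr 0)) (m (Sum.inr 1)) 1, key]
  abel

lemma sum_inl_sub (m : (ι ⊕ Fin 2) →₀ ℕ) (i : ι) (h : p i ≤ m (Sum.inl i)) (j : Fin 2) :
    (∑ k : ι, ((m - Finsupp.single (Sum.inl i : ι ⊕ Fin 2) (p i)
        + Finsupp.single (Sum.inr j : ι ⊕ Fin 2) 1 : (ι ⊕ Fin 2) →₀ ℕ)) (Sum.inl k))
      = (∑ k : ι, m (Sum.inl k)) - p i := by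
  set M := m - Finsupp.single (Sum.inl i) (p i) + Finsupp.single (Sum.inr j) 1 with hM
  have hMl : ∀ k, M (Sum.inl k) = m (Sum.inl k) - (if i = k then p i else 0) := by
    intro k
    simp [hM, Finsupp.add_apply, Finsupp.tsub_apply, Finsupp.single_apply, Sum.inl.injEq]
  have hsum : ∀ (f : ι → ℕ), (∑ k : ι, f k) = (∑ k ∈ Finset.univ.erase i, f k) + f i :=
    fun f => (Finset.sum_erase_add _ _ (Finset.mem_univ i)).symm
  rw [Finset.sum_congr rfl (fun k _ => hMl k), hsum, hsum (fun k => m (Sum.inl k)), if_pos rfl]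
  have herase : (∑ k ∈ Finset.univ.erase i, (m (Sum.inl k) - if i = k then p i else 0))
      = ∑ k ∈ Finset.univ.erase i, m (Sum.inl k) := by
    refine Finset.sum_congr rfl fun k hk => ?_
    rw [if_neg (Ne.symm (Finset.ne_of_mem_erase hk)), Nat.sub_zero]
  rw [herase]
  omega

lemma mk_C_mul (a : ℂ) (q : SPoly ι) :
    Ideal.Quotient.mk (SIdl ι p c0 c1) (C a * q)
      = a • Ideal.Quotient.mk (SIdl ι p c0 c1) q := by
  rw [← smul_eq_C_mul, ← Ideal.Quotient.mkₐ_eq_mk ℂ (SIdl ι p c0 c1), map_smul]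

/-- The set of classes of reduced monomials of weight `z`. -/
def RedSet (z : LGroup ι p) : Set (SAlg ι p c0 c1) :=
  {s | ∃ m : (ι ⊕ Fin 2) →₀ ℕ, (∀ i, m (Sum.inl i) < p i) ∧ wtA p m = z ∧
    s = Ideal.Quotient.mk (SIdl ι p c0 c1) (monomial m 1)}

lemma mon_mul_CX (a : ℂ) (b : (ι ⊕ Fin 2) →₀ ℕ) (s : ι ⊕ Fin 2) :
    monomial b (1:ℂ) * (C a * X s) = C a * monomial (b + Finsupp.single s 1) 1 := by
  rw [← pow_one (X s), X_pow_eq_monomial, C_mul_monomial, C_mul_monomial, monomial_mul]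
  ring_nf

lemma reduction_identity (m : (ι ⊕ Fin 2) →₀ ℕ) (i : ι) (h : p i ≤ m (Sum.inl i)) :
    Ideal.Quotient.mk (SIdl ι p c0 c1) (monomial m 1) =
      c0 i • Ideal.Quotient.mk (SIdl ι p c0 c1)
          (monomial (m - Finsupp.single (Sum.inl i) (p i) + Finsupp.single (Sum.inr 0) 1) 1)
      + c1 i • Ideal.Quotient.mk (SIdl ι p c0 c1)
          (monomial (m - Finsupp.single (Sum.inl i) (p i) + Finsupp.single (Sum.inr 1) 1) 1) := by
  set b := m - Finsupp.single (Sum.inl i) (p i) with hb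
  have hbm : b + Finsupp.single (Sum.inl i) (p i) = m := by
    rw [hb]
    exact tsub_add_cancel_of_le (Finsupp.single_le_iff.2 h)
  have hident : monomial m (1:ℂ) - (C (c0 i) * monomial (b + Finsupp.single (Sum.inr 0) 1) 1
      + C (c1 i) * monomial (b + Finsupp.single (Sum.inr 1) 1) 1)
      = monomial b 1 * (X (Sum.inl i) ^ (p i)
        - (C (c0 i) * X (Sum.inr 0) + C (c1 i) * X (Sum.inr 1))) := by
    rw [X_pow_eq_monomial, mul_sub, monomial_mul, mul_one, hbm, mul_add,
      mon_mul_CX, mon_mul_CX]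
  have hmem : monomial m (1:ℂ) - (C (c0 i) * monomial (b + Finsupp.single (Sum.inr 0) 1) 1
      + C (c1 i) * monomial (b + Finsupp.single (Sum.inr 1) 1) 1) ∈ SIdl ι p c0 c1 := by
    rw [hident]
    exact Ideal.mul_mem_left _ _ (Ideal.subset_span ⟨i, rfl⟩)
  have := (Ideal.Quotient.eq (I := SIdl ι p c0 c1)).2 hmem
  rw [this, map_add, mk_C_mul, mk_C_mul]

lemma span_monomial (z : LGroup ι p) (hp : ∀ i, p i ≠ 0) :
    ∀ (N : ℕ) (m : (ι ⊕ Fin 2) →₀ ℕ), (∑ i : ι, m (Sum.inl i)) = N → wtA p m = z →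
    Ideal.Quotient.mk (SIdl ι p c0 c1) (monomial m 1)
      ∈ Submodule.span ℂ (RedSet p c0 c1 z) := by
  intro N
  induction N using Nat.strong_induction_on with
  | _ N IH =>
    intro m hN hwt
    by_cases hred : ∀ i, m (Sum.inl i) < p i
    · exact Submodule.subset_span ⟨m, hred, hwt, rfl⟩
    · push_neg at hred
      obtain ⟨i, hi⟩ := hred
      rw [reduction_identity p c0 c1 m i hi]
      have hNpos : 0 < N := lt_of_lt_of_le (Nat.pos_of_ne_zero (hp i))
        (hN ▸ le_trans hi (Finset.single_le_sum (f := fun k => m (Sum.inl k)) (fun k _ => Nat.zero_le _) (Finset.mem_univ i)))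
      have hlt : N - p i < N := Nat.sub_lt hNpos (Nat.pos_of_ne_zero (hp i))
      refine Submodule.add_mem _ (Submodule.smul_mem _ _ ?_) (Submodule.smul_mem _ _ ?_)
      · exact IH (N - p i) hlt _ (by rw [sum_inl_sub p m i hi 0, hN]) (by rw [wtA_step p m i hi 0, hwt])
      · exact IH (N - p i) hlt _ (by rw [sum_inl_sub p m i hi 1, hN]) (by rw [wtA_step p m i hi 1, hwt])

end Span
section SpanCor

variable {ι : Type} [Fintype ι] [DecidableEq ι] (p : ι → ℕ) (c0 c1 : ι → ℂ)

/-- Polynomials all of whose monomials are reduced. -/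
def polyRed : Submodule ℂ (SPoly ι) where
  carrier := { f | ∀ m, coeff m f ≠ 0 → ∀ i, m (Sum.inl i) < p i }
  add_mem' := by
    intro f g hf hg m hm
    by_cases h : coeff m f = 0
    · refine hg m fun h' => hm ?_
      simp [coeff_add, h, h']
    · exact hf m h
  zero_mem' := by
    intro m hm
    simp at hm
  smul_mem' := by
    intro c f hf m hm
    refine hf m fun h => hm ?_
    simp [coeff_smul, h]

lemma monomial_mem_polyRed {m : (ι ⊕ Fin 2) →₀ ℕ} (hred : ∀ i, m (Sum.inl i) < p i) :
    (monomial m (1:ℂ)) ∈ polyRed p := by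
  intro m' hm' i
  rw [coeff_monomial] at hm'
  by_cases h : m = m'
  · exact h ▸ hred i
  · simp [h] at hm'

lemma monomial_mem_polyCompA {m : (ι ⊕ Fin 2) →₀ ℕ} {z : LGroup ι p} (hwt : wtA p m = z) :
    (monomial m (1:ℂ)) ∈ polyCompA p z := by
  intro m' hm'
  rw [coeff_monomial] at hm'
  by_cases h : m = m'
  · exact h ▸ hwt
  · simp [h] at hm'

lemma redset_sub_map (z : LGroup ι p) :
    RedSet p c0 c1 z ⊆
      ((polyRed p ⊓ polyCompA p z).map
        (Ideal.Quotient.mkₐ ℂ (SIdl ι p c0 c1)).toLinearMap : Set (SAlg ι p c0 c1)) := by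
  rintro s ⟨m, hred, hwt, rfl⟩
  exact ⟨monomial m 1, ⟨monomial_mem_polyRed p hred, monomial_mem_polyCompA p hwt⟩, rfl⟩

lemma mk_decomp (h : SPoly ι) :
    Ideal.Quotient.mk (SIdl ι p c0 c1) h
      = ∑ m ∈ h.support, coeff m h • Ideal.Quotient.mk (SIdl ι p c0 c1) (monomial m 1) := by
  conv_lhs => rw [← support_sum_monomial_coeff h]
  rw [map_sum]
  refine Finset.sum_congr rfl fun m _ => ?_
  rw [← mk_C_mul p c0 c1, C_mul_monomial, mul_one]

lemma SCompA_eq_map (hp : ∀ i, p i ≠ 0) (z : LGroup ι p) :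
    SCompA p c0 c1 z = (polyRed p ⊓ polyCompA p z).map
      (Ideal.Quotient.mkₐ ℂ (SIdl ι p c0 c1)).toLinearMap := by
  refine le_antisymm ?_ (le_trans (Submodule.map_mono inf_le_right) le_rfl)
  rintro s ⟨h, hh, rfl⟩
  have : (Ideal.Quotient.mkₐ ℂ (SIdl ι p c0 c1)).toLinearMap h
      = Ideal.Quotient.mk (SIdl ι p c0 c1) h := rfl
  rw [this, mk_decomp]
  refine Submodule.sum_mem _ fun m hm => Submodule.smul_mem _ _ ?_
  have hsp := span_monomial p c0 c1 z hp (∑ i : ι, m (Sum.inl i)) m rfl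
    (hh m (by simpa [MvPolynomial.mem_support_iff] using hm))
  exact (Submodule.span_le.2 (redset_sub_map p c0 c1 z)) hsp

lemma exists_red_rep (hp : ∀ i, p i ≠ 0) (s : SAlg ι p c0 c1) :
    ∃ g ∈ polyRed p, Ideal.Quotient.mk (SIdl ι p c0 c1) g = s := by
  obtain ⟨h, rfl⟩ := Ideal.Quotient.mk_surjective s
  have mem : Ideal.Quotient.mk (SIdl ι p c0 c1) h ∈
      (polyRed p).map (Ideal.Quotient.mkₐ ℂ (SIdl ι p c0 c1)).toLinearMap := by
    rw [mk_decomp]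
    refine Submodule.sum_mem _ fun m hm => Submodule.smul_mem _ _ ?_
    have hsp := span_monomial p c0 c1 (wtA p m) hp (∑ i : ι, m (Sum.inl i)) m rfl rfl
    refine (Submodule.span_le.2 ?_) hsp
    rintro s ⟨m', hred, _, rfl⟩
    exact ⟨monomial m' 1, monomial_mem_polyRed p hred, rfl⟩
  obtain ⟨g, hg, hgs⟩ := mem
  exact ⟨g, hg, hgs⟩

end SpanCor
section Grid

lemma grid_fin : ∀ (k : ℕ) (G : MvPolynomial (Fin k) ℂ) (A : Fin k → Finset ℂ),
    (∀ i, G.degreeOf i < (A i).card) →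
    (∀ x : Fin k → ℂ, (∀ i, x i ∈ A i) → eval x G = 0) → G = 0 := by
  intro k
  induction k with
  | zero =>
    intro G A _ hev
    have h0 := hev (fun i => i.elim0) (fun i => i.elim0)
    rw [eq_C_of_isEmpty G] at h0 ⊢
    rw [eval_C] at h0
    rw [h0, map_zero]
  | succ k IH =>
    intro G A hdeg hev
    set G' := finSuccEquiv ℂ k G with hG'
    have hcoeff : ∀ x : Fin k → ℂ, (∀ i, x i ∈ A i.succ) → ∀ j, eval x (G'.coeff j) = 0 := by
      intro x hx
      have hPx : (Polynomial.map (eval x) G') = 0 := by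
        apply Polynomial.eq_zero_of_natDegree_lt_card_of_eval_eq_zero' _ (A 0)
        · intro a ha
          rw [← eval_eq_eval_mv_eval']
          apply hev
          intro i
          refine Fin.cases ?_ ?_ i
          · simpa using ha
          · intro i'
            simpa using hx i'
        · calc (Polynomial.map (eval x) G').natDegree
              ≤ G'.natDegree := Polynomial.natDegree_map_le
            _ = G.degreeOf 0 := natDegree_finSuccEquiv G
            _ < (A 0).card := hdeg 0
      intro j
      have := congrArg (fun q => Polynomial.coeff q j) hPx
      simpa [Polynomial.coeff_map] using this
    have hc0 : ∀ j, G'.coeff j = 0 := by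
      intro j
      refine IH (G'.coeff j) (fun i => A i.succ) ?_ (fun x hx => hcoeff x hx j)
      intro i
      exact lt_of_le_of_lt (degreeOf_coeff_finSuccEquiv G i j) (hdeg i.succ)
    have hG'0 : G' = 0 := Polynomial.ext fun j => by rw [hc0 j]; simp
    have := congrArg (finSuccEquiv ℂ k).symm hG'0
    simpa [hG'] using this

lemma grid {σ : Type} [Fintype σ] [DecidableEq σ] (G : MvPolynomial σ ℂ) (A : σ → Finset ℂ)
    (hdeg : ∀ i, G.degreeOf i < (A i).card)
    (hev : ∀ x : σ → ℂ, (∀ i, x i ∈ A i) → eval x G = 0) : G = 0 := by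
  let e := Fintype.equivFin σ
  have h2 : rename e G = 0 := by
    apply grid_fin _ (rename e G) (fun j => A (e.symm j))
    · intro j
      have := degreeOf_rename_of_injective (p := G) e.injective (e.symm j)
      rw [Equiv.apply_symm_apply] at this
      rw [this]
      exact hdeg _
    · intro x hx
      rw [eval_rename]
      apply hev
      intro i
      have := hx (e i)
      rwa [Equiv.symm_apply_apply] at this
  have := congrArg (rename (e.symm : Fin (Fintype.card σ) → σ)) h2
  rw [map_zero, rename_rename] at this
  simpa [Equiv.symm_comp_self, rename_id] using this

end Grid

section Key

variable {ι : Type} [Fintype ι] [DecidableEq ι] (p : ι → ℕ) (c0 c1 : ι → ℂ)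

/-- Partial evaluation of the `t`-variables. -/
def Pev (τ : Fin 2 → ℂ) : SPoly ι →+* MvPolynomial ι ℂ :=
  eval₂Hom C (Sum.elim X (fun j => C (τ j)))

lemma eval_Pev (x : ι → ℂ) (τ : Fin 2 → ℂ) (g : SPoly ι) :
    eval x (Pev τ g) = eval (Sum.elim x τ) g := by
  have h : (eval x).comp (Pev (ι := ι) τ) = eval (Sum.elim x τ) := by
    apply ringHom_ext
    · intro a; simp [Pev]
    · intro s; cases s <;> simp [Pev]
  exact RingHom.congr_fun h g

lemma eval_in_ideal (g : SPoly ι) (hg : g ∈ SIdl ι p c0 c1) (w : ι ⊕ Fin 2 → ℂ)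
    (hw : ∀ i, w (Sum.inl i) ^ (p i) = c0 i * w (Sum.inr 0) + c1 i * w (Sum.inr 1)) :
    eval w g = 0 := by
  have hker : SIdl ι p c0 c1 ≤ RingHom.ker (eval w) := by
    rw [SIdl, Ideal.span_le]
    rintro f ⟨i, rfl⟩
    simp [RingHom.mem_ker, hw i]
  exact hker hg

lemma monomial_eq_prod' {σ : Type} [Fintype σ] [DecidableEq σ] (b : σ →₀ ℕ) :
    monomial b (1:ℂ) = ∏ s : σ, X s ^ b s := by
  rw [← prod_X_pow_eq_monomial]
  refine (Finset.prod_subset (f := fun s => (X s : MvPolynomial σ ℂ) ^ b s) (Finset.subset_univ b.support) ?_)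
  intro s _ hs
  rw [Finsupp.notMem_support_iff.1 hs, pow_zero]

/-- Restriction of an exponent vector to the `ι`-part. -/
def restr (m : (ι ⊕ Fin 2) →₀ ℕ) : ι →₀ ℕ :=
  Finsupp.equivFunOnFinite.symm (fun i => m (Sum.inl i))

@[simp] lemma restr_apply (m : (ι ⊕ Fin 2) →₀ ℕ) (i : ι) : restr m i = m (Sum.inl i) := rfl

lemma Pev_monomial (τ : Fin 2 → ℂ) (m : (ι ⊕ Fin 2) →₀ ℕ) (c : ℂ) :
    Pev τ (monomial m c) = C (c * ∏ j : Fin 2, τ j ^ m (Sum.inr j)) * monomial (restr m) 1 := by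
  have hmc : monomial m c = C c * monomial m 1 := by rw [C_mul_monomial, mul_one]
  rw [hmc, map_mul]
  have h1 : Pev (ι := ι) τ (C c) = C c := by simp [Pev]
  rw [h1, monomial_eq_prod' m, map_prod, Fintype.prod_sum_type]
  simp only [map_pow]
  have h2 : ∀ i : ι, Pev τ (X (Sum.inl i)) = X i := by intro i; simp [Pev]
  have h3 : ∀ j : Fin 2, Pev (ι := ι) τ (X (Sum.inr j)) = C (τ j) := by intro j; simp [Pev]
  simp only [h2, h3]
  rw [monomial_eq_prod' (restr m)]
  simp only [restr_apply]
  have hC : (∏ x : Fin 2, (C (τ x) : MvPolynomial ι ℂ) ^ m (Sum.inr x)) = (C (∏ j : Fin 2, τ j ^ m (Sum.inr j)) : MvPolynomial ι ℂ) := by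
    simp only [← map_pow (C : ℂ →+* MvPolynomial ι ℂ), ← map_prod]
  rw [hC, map_mul (C : ℂ →+* MvPolynomial ι ℂ)]
  ring

lemma Pev_support (τ : Fin 2 → ℂ) (g : SPoly ι) (m₂ : ι →₀ ℕ)
    (h : coeff m₂ (Pev τ g) ≠ 0) : ∃ m ∈ g.support, m₂ = restr m := by
  have hdecomp : Pev τ g = ∑ m ∈ g.support, Pev τ (monomial m (coeff m g)) := by
    conv_lhs => rw [← support_sum_monomial_coeff g]
    rw [map_sum]
  rw [hdecomp, coeff_sum] at h
  obtain ⟨m, hm, hne⟩ := Finset.exists_ne_zero_of_sum_ne_zero h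
  refine ⟨m, hm, ?_⟩
  rw [Pev_monomial] at hne
  have : C (coeff m g * ∏ j : Fin 2, τ j ^ m (Sum.inr j)) * monomial (restr m) (1:ℂ)
      = monomial (restr m) (coeff m g * ∏ j : Fin 2, τ j ^ m (Sum.inr j)) := by
    rw [C_mul_monomial, mul_one]
  rw [this, coeff_monomial] at hne
  by_cases he : restr m = m₂
  · exact he.symm
  · simp [he] at hne

theorem key_indep (hp : ∀ i, p i ≠ 0) (hnz : ∀ i, (c0 i, c1 i) ≠ (0,0)) (g : SPoly ι)
    (hg : g ∈ SIdl ι p c0 c1) (hred : g ∈ polyRed p) : g = 0 := by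
  have stepA : ∀ τ : Fin 2 → ℂ, (∀ i, c0 i * τ 0 + c1 i * τ 1 ≠ 0) → Pev τ g = 0 := by
    intro τ hτ
    set A : ι → Finset ℂ :=
      fun i => (Polynomial.nthRoots (p i) (c0 i * τ 0 + c1 i * τ 1)).toFinset with hA
    have hcard : ∀ i, (A i).card = p i := by
      intro i
      have hprim := Complex.isPrimitiveRoot_exp (p i) (hp i)
      rw [hA]
      rw [Multiset.toFinset_card_of_nodup (hprim.nthRoots_nodup (hτ i))]
      rw [hprim.card_nthRoots]
      rw [if_pos (IsAlgClosed.exists_pow_nat_eq _ (Nat.pos_of_ne_zero (hp i)))]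
    apply grid (Pev τ g) A
    · intro i
      rw [hcard]
      rw [degreeOf_lt_iff (Nat.pos_of_ne_zero (hp i))]
      intro m₂ hm₂
      obtain ⟨m, hm, rfl⟩ := Pev_support τ g m₂ (mem_support_iff.1 hm₂)
      simpa using hred m (mem_support_iff.1 hm) i
    · intro x hx
      rw [eval_Pev]
      apply eval_in_ideal p c0 c1 g hg
      intro i
      simp only [Sum.elim_inl, Sum.elim_inr]
      exact (Polynomial.mem_nthRoots (Nat.pos_of_ne_zero (hp i))).1
        (Multiset.mem_toFinset.1 (hx i))
  set P : SPoly ι := ∏ i : ι, (C (c0 i) * X (Sum.inr 0) + C (c1 i) * X (Sum.inr 1)) with hP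
  have hvanish : ∀ w : ι ⊕ Fin 2 → ℂ, eval w (g * P) = 0 := by
    intro w
    rw [map_mul]
    by_cases hgood : ∀ i, c0 i * w (Sum.inr 0) + c1 i * w (Sum.inr 1) ≠ 0
    · have hzero : eval w g = 0 := by
        have h1 : eval w g = eval (w ∘ Sum.inl) (Pev (fun j => w (Sum.inr j)) g) := by
          rw [eval_Pev]
          have hw : Sum.elim (w ∘ Sum.inl) (fun j => w (Sum.inr j)) = w := by
            funext s; cases s <;> rfl
          rw [hw]
        rw [h1, stepA _ hgood, map_zero]
      rw [hzero, zero_mul]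
    · push_neg at hgood
      obtain ⟨i, hi⟩ := hgood
      have hzero : eval w P = 0 := by
        rw [hP, map_prod]
        apply Finset.prod_eq_zero (Finset.mem_univ i)
        simpa using hi
      rw [hzero, mul_zero]
  have hgP : g * P = 0 := by
    apply MvPolynomial.funext
    intro x
    rw [hvanish x, map_zero]
  have hPne : P ≠ 0 := by
    rw [hP]
    apply Finset.prod_ne_zero_iff.2
    intro i _
    intro hzero
    have h0 : c0 i = 0 := by
      have := congrArg (coeff (Finsupp.single (Sum.inr 0) 1)) hzero
      simpa [coeff_add, coeff_C_mul, coeff_X', Finsupp.single_eq_single_iff] using this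
    have h1 : c1 i = 0 := by
      have := congrArg (coeff (Finsupp.single (Sum.inr 1) 1)) hzero
      simpa [coeff_add, coeff_C_mul, coeff_X', Finsupp.single_eq_single_iff] using this
    exact hnz i (by rw [h0, h1])
  rcases mul_eq_zero.1 hgP with h | h
  · exact h
  · exact absurd h hPne

end Key
section Phi

variable {n : ℕ} (p : Fin n → ℕ) (c0 c1 : Fin n → ℂ) (I : Finset (Fin n)) (d : Fin n → ℕ)

/-- Sums over the subtype vs. full type, for functions vanishing off `I`. -/
lemma sum_subtype_ext {β : Type} [AddCommMonoid β] (F : Fin n → β)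
    (hF : ∀ j, j ∉ I → F j = 0) : ∑ i : ↥I, F i.1 = ∑ j : Fin n, F j := by
  rw [Finset.sum_coe_sort I F]
  exact Finset.sum_subset (Finset.subset_univ I) (fun j _ hj => hF j hj)

lemma prod_subtype_ext {β : Type} [CommMonoid β] (F : Fin n → β)
    (hF : ∀ j, j ∉ I → F j = 1) : ∏ i : ↥I, F i.1 = ∏ j : Fin n, F j := by
  rw [Finset.prod_coe_sort I F]
  exact Finset.prod_subset (Finset.subset_univ I) (fun j _ hj => hF j hj)

/-- The lift of `φ` on representatives. -/
def phiAux : (Option ↥I → ℤ) →+ LGroup (Fin n) p where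
  toFun v := (∑ i : ↥I, v (some i) • ((d i.1) • egen p i.1)) + v none • cgen p
  map_zero' := by simp
  map_add' v w := by
    simp only [Pi.add_apply, add_zsmul, Finset.sum_add_distrib]
    abel

lemma phiAux_apply (v : Option ↥I → ℤ) :
    phiAux p I d v = (∑ i : ↥I, v (some i) • ((d i.1) • egen p i.1)) + v none • cgen p := rfl

lemma phiAux_single_none : phiAux p I d (Pi.single none 1) = cgen p := by
  rw [phiAux_apply]
  simp [Pi.single_apply]

lemma phiAux_single_some (i : ↥I) :
    phiAux p I d (Pi.single (some i) 1) = (d i.1) • egen p i.1 := by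
  rw [phiAux_apply]
  simp only [Pi.single_apply, Option.some.injEq]
  rw [Finset.sum_eq_single i (by intro b _ hb; simp [hb]) (by simp)]
  simp

variable (hd : ∀ i ∈ I, d i ∣ p i)
include hd

lemma phiAux_rel : ∀ v ∈ LRel ↥I (pRes p d I), phiAux p I d v = 0 := by
  intro v hv
  induction hv using AddSubgroup.closure_induction with
  | mem v hv =>
    obtain ⟨i, rfl⟩ := hv
    rw [map_sub, map_zsmul, phiAux_single_none, phiAux_single_some]
    rw [natCast_zsmul, smul_smul]
    have : pRes p d I i * d i.1 = p i.1 := by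
      rw [pRes, Nat.div_mul_cancel (hd i.1 i.2)]
    rw [this, pe_eq_c' p i.1, sub_self]
  | zero => simp
  | add x y _ _ hx hy => rw [map_add, hx, hy, add_zero]
  | neg x _ hx => rw [map_neg, hx, neg_zero]

/-- The group homomorphism `φ : L' → L`. -/
def phiMap : LGroup ↥I (pRes p d I) →+ LGroup (Fin n) p :=
  QuotientAddGroup.lift _ (phiAux p I d) (phiAux_rel p I d hd)

lemma phiMap_mk (v : Option ↥I → ℤ) :
    phiMap p I d hd (mkL (pRes p d I) v) = phiAux p I d v := rfl

lemma phiMap_egen (i : ↥I) :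
    phiMap p I d hd (egen (pRes p d I) i) = (d i.1) • egen p i.1 :=
  phiAux_single_some p I d i

lemma phiMap_cgen : phiMap p I d hd (cgen (pRes p d I)) = cgen p :=
  phiAux_single_none p I d

/-- The image of a representative under `φ`, as a representative. -/
def vhat (v : Option ↥I → ℤ) : Option (Fin n) → ℤ := fun x =>
  match x with
  | none => v none
  | some j => if h : j ∈ I then (d j : ℤ) * v (some ⟨j, h⟩) else 0

lemma phiAux_eq_mkL (v : Option ↥I → ℤ) :
    phiAux p I d v = mkL p (vhat I d v) := by
  rw [mkL_eq_sum, phiAux_apply]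
  congr 1
  have hterm : ∀ i : ↥I, v (some i) • ((d i.1) • egen p i.1)
      = (vhat I d v (some i.1)) • egen p i.1 := by
    intro i
    show _ = (if h : i.1 ∈ I then (d i.1 : ℤ) * v (some ⟨i.1, h⟩) else 0) • egen p i.1
    rw [dif_pos i.2, Subtype.coe_eta, ← natCast_zsmul (egen p i.1) (d i.1), smul_smul, mul_comm]
  rw [Finset.sum_congr rfl (fun i _ => hterm i)]
  exact sum_subtype_ext I (fun j => (vhat I d v (some j)) • egen p j)
    (fun j hj => by
      have h0 : vhat I d v (some j) = 0 := dif_neg hj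
      simp [h0])

lemma qaux_vhat (hd1 : ∀ i ∈ I, 1 ≤ d i) (hppos : ∀ j, p j ≠ 0) (v : Option ↥I → ℤ) :
    qaux p (vhat I d v) = qaux (pRes p d I) v := by
  rw [qaux_apply, qaux_apply]
  congr 1
  have hterm : ∀ i : ↥I, ((v (some i) : ℚ) / (pRes p d I i : ℚ))
      = ((vhat I d v (some i.1) : ℚ) / (p i.1 : ℚ)) := by
    intro i
    show _ = ((if h : i.1 ∈ I then (d i.1 : ℤ) * v (some ⟨i.1, h⟩) else 0 : ℤ) : ℚ) / (p i.1 : ℚ)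
    rw [dif_pos i.2, Subtype.coe_eta]
    push_cast
    have hsplit : (p i.1 : ℚ) = (d i.1 : ℚ) * (pRes p d I i : ℚ) := by
      rw [pRes]
      rw [← Nat.cast_mul, Nat.mul_div_cancel' (hd i.1 i.2)]
    rw [hsplit, mul_div_mul_left]
    exact_mod_cast Nat.one_le_iff_ne_zero.1 (hd1 i.1 i.2)
  rw [Finset.sum_congr rfl (fun i _ => hterm i)]
  exact (sum_subtype_ext I (fun j => ((vhat I d v (some j) : ℚ) / (p j : ℚ)))
    (fun j hj => by
      have h0 : vhat I d v (some j) = 0 := dif_neg hj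
      simp [h0])).symm

lemma pRes_ne_zero (hp : ∀ i, 2 ≤ p i) (hd1 : ∀ i ∈ I, 1 ≤ d i) (i : ↥I) :
    pRes p d I i ≠ 0 := by
  rw [pRes]
  have h1 : d i.1 ≤ p i.1 := Nat.le_of_dvd (lt_of_lt_of_le two_pos (hp i.1)) (hd i.1 i.2)
  have := (Nat.one_le_div_iff (lt_of_lt_of_le one_pos (hd1 i.1 i.2))).2 h1
  omega

lemma phiMap_injective (hp : ∀ i, 2 ≤ p i) (hd1 : ∀ i ∈ I, 1 ≤ d i) :
    Function.Injective (phiMap p I d hd) := by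
  have hppos : ∀ j, p j ≠ 0 := fun j => by have := hp j; omega
  have hp' : ∀ i : ↥I, pRes p d I i ≠ 0 := pRes_ne_zero p I d hd hp hd1
  refine (injective_iff_map_eq_zero _).2 ?_
  intro y hy
  obtain ⟨v, rfl⟩ := QuotientAddGroup.mk'_surjective (LRel ↥I (pRes p d I)) y
  rw [show QuotientAddGroup.mk' (LRel ↥I (pRes p d I)) v = mkL (pRes p d I) v from rfl] at hy ⊢
  rw [phiMap_mk p I d hd, phiAux_eq_mkL p I d hd, mkL_eq_zero_iff p hppos] at hy
  obtain ⟨hdvd, hq⟩ := hy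
  rw [mkL_eq_zero_iff (pRes p d I) hp']
  constructor
  · intro i
    have h1 := hdvd i.1
    rw [show vhat I d v (some i.1) = (d i.1 : ℤ) * v (some i) from by
      show (if h : i.1 ∈ I then _ else (0:ℤ)) = _
      rw [dif_pos i.2, Subtype.coe_eta]] at h1
    have hsplit : (p i.1 : ℤ) = (d i.1 : ℤ) * (pRes p d I i : ℤ) := by
      rw [pRes, ← Nat.cast_mul, Nat.mul_div_cancel' (hd i.1 i.2)]
    rw [hsplit] at h1
    obtain ⟨k, hk⟩ := h1
    refine ⟨k, ?_⟩
    have hdne : (d i.1 : ℤ) ≠ 0 := by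
      exact_mod_cast Nat.one_le_iff_ne_zero.1 (hd1 i.1 i.2)
    apply mul_left_cancel₀ hdne
    rw [hk]; ring
  · rw [← qaux_vhat p I d hd hd1 hppos v]
    exact hq

end Phi
section ZmapWt

variable {ι : Type} [Fintype ι] [DecidableEq ι] (p : ι → ℕ)

lemma zmap_egen (i j : ι) : zmap p i (egen p j) = if i = j then 1 else 0 := by
  rw [egen_def, zmap_mk, Pi.single_apply]
  by_cases h : some i = some j
  · rw [if_pos h, if_pos (by simpa using h)]; simp
  · rw [if_neg h, if_neg (by simpa using h)]; simp

lemma zmap_cgen (i : ι) : zmap p i (cgen p) = 0 := by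
  rw [cgen_def, zmap_mk, Pi.single_apply]
  simp

lemma zmap_wtA (i : ι) (m : (ι ⊕ Fin 2) →₀ ℕ) :
    zmap p i (wtA p m) = (m (Sum.inl i) : ZMod (p i)) := by
  rw [wtA, map_add, map_nsmul, zmap_cgen, smul_zero, add_zero, map_sum]
  rw [Finset.sum_congr rfl (fun j _ => by rw [map_nsmul, zmap_egen])]
  rw [Finset.sum_eq_single i (by intro b _ hb; rw [if_neg (Ne.symm hb), smul_zero]) (by simp)]
  rw [if_pos rfl, nsmul_eq_mul, mul_one]

end ZmapWt

section FMap

variable {n : ℕ} (p : Fin n → ℕ) (c0 c1 : Fin n → ℂ) (I : Finset (Fin n)) (d : Fin n → ℕ)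

/-- The map on exponent vectors induced by `x'ᵢ ↦ xᵢ^{dᵢ}`. -/
def expMap (m' : (↥I ⊕ Fin 2) →₀ ℕ) : (Fin n ⊕ Fin 2) →₀ ℕ :=
  Finsupp.equivFunOnFinite.symm (fun s => match s with
    | Sum.inl j => if h : j ∈ I then d j * m' (Sum.inl ⟨j, h⟩) else 0
    | Sum.inr j => m' (Sum.inr j))

lemma expMap_inl (m' : (↥I ⊕ Fin 2) →₀ ℕ) (j : Fin n) :
    expMap I d m' (Sum.inl j) = if h : j ∈ I then d j * m' (Sum.inl ⟨j, h⟩) else 0 := rfl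

lemma expMap_inr (m' : (↥I ⊕ Fin 2) →₀ ℕ) (j : Fin 2) :
    expMap I d m' (Sum.inr j) = m' (Sum.inr j) := rfl

lemma expMap_injective (hd1 : ∀ i ∈ I, 1 ≤ d i) : Function.Injective (expMap I d) := by
  intro m₁ m₂ h
  ext s
  cases s with
  | inl i =>
    have h1 := DFunLike.congr_fun h (Sum.inl i.1)
    rw [expMap_inl, expMap_inl, dif_pos i.2, dif_pos i.2, Subtype.coe_eta] at h1
    exact Nat.eq_of_mul_eq_mul_left (lt_of_lt_of_le one_pos (hd1 i.1 i.2)) h1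
  | inr j => exact DFunLike.congr_fun h (Sum.inr j)

/-- The algebra map `F` on polynomial rings. -/
def Fpoly : SPoly ↥I →ₐ[ℂ] SPoly (Fin n) :=
  aeval (fun s => match s with
    | Sum.inl i => X (Sum.inl i.1) ^ d i.1
    | Sum.inr j => X (Sum.inr j))

lemma Fpoly_X_inl (i : ↥I) : Fpoly I d (X (Sum.inl i)) = X (Sum.inl i.1) ^ d i.1 := by
  simp [Fpoly]

lemma Fpoly_X_inr (j : Fin 2) : Fpoly I d (X (Sum.inr j)) = X (Sum.inr j) := by
  simp [Fpoly]

lemma Fpoly_C (c : ℂ) : Fpoly I d (C c) = C c := by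
  simp [Fpoly, algebraMap_eq]

lemma Fpoly_monomial (m' : (↥I ⊕ Fin 2) →₀ ℕ) (c : ℂ) :
    Fpoly I d (monomial m' c) = monomial (expMap I d m') c := by
  rw [show (monomial m' c : SPoly ↥I) = C c * monomial m' 1 from by rw [C_mul_monomial, mul_one]]
  rw [show (monomial (expMap I d m') c : SPoly (Fin n)) = C c * monomial (expMap I d m') 1 from
    by rw [C_mul_monomial, mul_one]]
  rw [map_mul, Fpoly_C]
  congr 1
  rw [monomial_eq_prod' m', map_prod, Fintype.prod_sum_type]
  rw [monomial_eq_prod' (expMap I d m'), Fintype.prod_sum_type]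
  simp only [map_pow, Fpoly_X_inl, Fpoly_X_inr, ← pow_mul]
  congr 1
  · have hterm : ∀ i : ↥I, (X (Sum.inl i.1) ^ (d i.1 * m' (Sum.inl i)) : SPoly (Fin n))
        = X (Sum.inl i.1) ^ (expMap I d m' (Sum.inl i.1)) := by
      intro i
      rw [expMap_inl, dif_pos i.2, Subtype.coe_eta]
    rw [Finset.prod_congr rfl (fun i _ => hterm i)]
    exact prod_subtype_ext I (fun j => (X (Sum.inl j) ^ (expMap I d m' (Sum.inl j)) : SPoly (Fin n)))
      (fun j hj => by
        show (X (Sum.inl j) : SPoly (Fin n)) ^ (expMap I d m' (Sum.inl j)) = 1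
        rw [expMap_inl, dif_neg hj, pow_zero])

/-- The inverse map on exponent vectors. -/
def invExp (m : (Fin n ⊕ Fin 2) →₀ ℕ) : (↥I ⊕ Fin 2) →₀ ℕ :=
  Finsupp.equivFunOnFinite.symm (fun s => match s with
    | Sum.inl i => m (Sum.inl i.1) / d i.1
    | Sum.inr j => m (Sum.inr j))

lemma invExp_inl (m : (Fin n ⊕ Fin 2) →₀ ℕ) (i : ↥I) :
    invExp I d m (Sum.inl i) = m (Sum.inl i.1) / d i.1 := rfl

lemma invExp_inr (m : (Fin n ⊕ Fin 2) →₀ ℕ) (j : Fin 2) :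
    invExp I d m (Sum.inr j) = m (Sum.inr j) := rfl

variable (hd : ∀ i ∈ I, d i ∣ p i)
include hd

lemma wtA_expMap (m' : (↥I ⊕ Fin 2) →₀ ℕ) :
    wtA p (expMap I d m') = phiMap p I d hd (wtA (pRes p d I) m') := by
  have hR : phiMap p I d hd (wtA (pRes p d I) m')
      = (∑ i : ↥I, m' (Sum.inl i) • ((d i.1) • egen p i.1))
        + (m' (Sum.inr 0) + m' (Sum.inr 1)) • cgen p := by
    rw [wtA, map_add, map_nsmul, map_sum, phiMap_cgen]
    congr 1
    refine Finset.sum_congr rfl fun i _ => ?_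
    rw [map_nsmul, phiMap_egen]
  rw [hR, wtA]
  have hterm : ∀ i : ↥I, m' (Sum.inl i) • ((d i.1) • egen p i.1)
      = (expMap I d m' (Sum.inl i.1)) • egen p i.1 := by
    intro i
    rw [smul_smul, expMap_inl, dif_pos i.2, Subtype.coe_eta, mul_comm]
  rw [Finset.sum_congr rfl (fun i (_ : i ∈ (Finset.univ : Finset ↥I)) => hterm i)]
  congr 1
  exact (sum_subtype_ext I (fun j => (expMap I d m' (Sum.inl j)) • egen p j)
      (fun j hj => by
        show (expMap I d m') (Sum.inl j) • egen p j = 0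
        rw [expMap_inl, dif_neg hj]
        exact zero_nsmul _)).symm

lemma NF (hp : ∀ i, 2 ≤ p i) (hd1 : ∀ i ∈ I, 1 ≤ d i) (y : LGroup ↥I (pRes p d I))
    (m : (Fin n ⊕ Fin 2) →₀ ℕ) (hred : ∀ j, m (Sum.inl j) < p j)
    (hwt : wtA p m = phiMap p I d hd y) :
    expMap I d (invExp I d m) = m ∧ wtA (pRes p d I) (invExp I d m) = y := by
  obtain ⟨v, rfl⟩ := QuotientAddGroup.mk'_surjective (LRel ↥I (pRes p d I)) y
  rw [show QuotientAddGroup.mk' (LRel ↥I (pRes p d I)) v = mkL (pRes p d I) v from rfl] at hwt ⊢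
  have hwt2 := hwt
  rw [phiMap_mk p I d hd, phiAux_eq_mkL p I d hd] at hwt2
  have hdiff : ∀ j : Fin n, (p j : ℤ) ∣ (vhat I d v (some j) - (m (Sum.inl j) : ℤ)) := by
    intro j
    have hz := congrArg (zmap p j) hwt2
    rw [zmap_wtA, zmap_mk] at hz
    rw [← ZMod.intCast_zmod_eq_zero_iff_dvd, Int.cast_sub, sub_eq_zero, ← hz]
    push_cast
    rfl
  have hA : ∀ j, j ∉ I → m (Sum.inl j) = 0 := by
    intro j hj
    have h0 : vhat I d v (some j) = 0 := dif_neg hj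
    have := hdiff j
    rw [h0, zero_sub, Int.dvd_neg, Int.natCast_dvd_natCast] at this
    exact Nat.eq_zero_of_dvd_of_lt this (hred j)
  have hB : ∀ i : ↥I, d i.1 ∣ m (Sum.inl i.1) := by
    intro i
    have hv : vhat I d v (some i.1) = (d i.1 : ℤ) * v (some i) := by
      show (if h : i.1 ∈ I then _ else (0:ℤ)) = _
      rw [dif_pos i.2, Subtype.coe_eta]
    have hd2 : (d i.1 : ℤ) ∣ (vhat I d v (some i.1) - (m (Sum.inl i.1) : ℤ)) :=
      dvd_trans (Int.natCast_dvd_natCast.2 (hd i.1 i.2)) (hdiff i.1)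
    have hd3 : (d i.1 : ℤ) ∣ (m (Sum.inl i.1) : ℤ) := by
      have := dvd_sub (hv ▸ Dvd.intro _ rfl : (d i.1 : ℤ) ∣ vhat I d v (some i.1)) hd2
      simpa using this
    exact_mod_cast hd3
  have hexp : expMap I d (invExp I d m) = m := by
    ext s
    cases s with
    | inl j =>
      rw [expMap_inl]
      by_cases hj : j ∈ I
      · rw [dif_pos hj, invExp_inl, Nat.mul_div_cancel' (hB ⟨j, hj⟩)]
      · rw [dif_neg hj, hA j hj]
    | inr j => rw [expMap_inr, invExp_inr]
  refine ⟨hexp, ?_⟩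
  apply phiMap_injective p I d hd hp hd1
  rw [← wtA_expMap p I d hd, hexp, hwt]

end FMap
section FAlg

variable {n : ℕ} (p : Fin n → ℕ) (c0 c1 : Fin n → ℂ) (I : Finset (Fin n)) (d : Fin n → ℕ)

lemma coeff_Fpoly (hd1 : ∀ i ∈ I, 1 ≤ d i) (g : SPoly ↥I) (m₀ : (↥I ⊕ Fin 2) →₀ ℕ) :
    coeff (expMap I d m₀) (Fpoly I d g) = coeff m₀ g := by
  conv_lhs => rw [← support_sum_monomial_coeff g, map_sum]
  rw [coeff_sum]
  rw [Finset.sum_congr rfl (fun m' (_ : m' ∈ g.support) => by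
    rw [Fpoly_monomial, coeff_monomial])]
  rw [Finset.sum_eq_single m₀ ?_ ?_]
  · rw [if_pos rfl]
  · intro m' _ hne
    rw [if_neg (fun he => hne (expMap_injective I d hd1 he))]
  · intro hm
    rw [if_pos rfl]
    exact (notMem_support_iff.1 hm).symm ▸ rfl

lemma support_Fpoly (g : SPoly ↥I) (m : (Fin n ⊕ Fin 2) →₀ ℕ)
    (h : coeff m (Fpoly I d g) ≠ 0) : ∃ m', coeff m' g ≠ 0 ∧ m = expMap I d m' := by
  have hdecomp : Fpoly I d g = ∑ m' ∈ g.support, monomial (expMap I d m') (coeff m' g) := by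
    conv_lhs => rw [← support_sum_monomial_coeff g, map_sum]
    exact Finset.sum_congr rfl fun m' _ => Fpoly_monomial I d m' _
  rw [hdecomp, coeff_sum] at h
  obtain ⟨m', hm', hne⟩ := Finset.exists_ne_zero_of_sum_ne_zero h
  rw [coeff_monomial] at hne
  by_cases he : expMap I d m' = m
  · exact ⟨m', mem_support_iff.1 hm', he.symm⟩
  · rw [if_neg he] at hne
    exact absurd rfl hne

variable (hd : ∀ i ∈ I, d i ∣ p i)
include hd

lemma Fpoly_ker : ∀ a ∈ SIdl ↥I (pRes p d I) (cRes c0 I) (cRes c1 I),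
    ((Ideal.Quotient.mkₐ ℂ (SIdl (Fin n) p c0 c1)).comp (Fpoly I d)) a = 0 := by
  have hle : SIdl ↥I (pRes p d I) (cRes c0 I) (cRes c1 I) ≤
      RingHom.ker ((Ideal.Quotient.mkₐ ℂ (SIdl (Fin n) p c0 c1)).comp (Fpoly I d)) := by
    rw [SIdl, Ideal.span_le]
    rintro f ⟨i, rfl⟩
    simp only [SetLike.mem_coe, RingHom.mem_ker, AlgHom.coe_comp, Function.comp_apply]
    rw [map_sub, map_pow, Fpoly_X_inl, map_add, map_mul, map_mul, Fpoly_C, Fpoly_C,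
      Fpoly_X_inr, Fpoly_X_inr, ← pow_mul]
    have hpow : d i.1 * pRes p d I i = p i.1 := Nat.mul_div_cancel' (hd i.1 i.2)
    rw [hpow]
    rw [map_sub]
    have : (Ideal.Quotient.mkₐ ℂ (SIdl (Fin n) p c0 c1))
        (X (Sum.inl i.1) ^ p i.1 - (C (c0 i.1) * X (Sum.inr 0) + C (c1 i.1) * X (Sum.inr 1)))
        = 0 := by
      rw [Ideal.Quotient.mkₐ_eq_mk, Ideal.Quotient.eq_zero_iff_mem]
      exact Ideal.subset_span ⟨i.1, rfl⟩
    rw [map_sub] at this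
    convert this using 2
    rfl
  intro a ha
  exact hle ha

/-- The algebra homomorphism `f : S' → S`. -/
def fAlg : SAlg ↥I (pRes p d I) (cRes c0 I) (cRes c1 I) →ₐ[ℂ] SAlg (Fin n) p c0 c1 :=
  Ideal.Quotient.liftₐ _ ((Ideal.Quotient.mkₐ ℂ (SIdl (Fin n) p c0 c1)).comp (Fpoly I d))
    (Fpoly_ker p c0 c1 I d hd)

lemma fAlg_mk (g : SPoly ↥I) :
    fAlg p c0 c1 I d hd (Ideal.Quotient.mk (SIdl ↥I (pRes p d I) (cRes c0 I) (cRes c1 I)) g)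
      = Ideal.Quotient.mk (SIdl (Fin n) p c0 c1) (Fpoly I d g) := rfl

lemma fAlg_injective (hp : ∀ i, 2 ≤ p i) (hd1 : ∀ i ∈ I, 1 ≤ d i)
    (hnz : ∀ i, (c0 i, c1 i) ≠ (0, 0)) : Function.Injective (fAlg p c0 c1 I d hd) := by
  have hppos : ∀ j, p j ≠ 0 := fun j => by have := hp j; omega
  have hp' : ∀ i : ↥I, pRes p d I i ≠ 0 := pRes_ne_zero p I d hd hp hd1
  refine (injective_iff_map_eq_zero _).2 ?_
  intro s hs
  obtain ⟨g, hgred, rfl⟩ := exists_red_rep (pRes p d I) (cRes c0 I) (cRes c1 I) hp' s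
  rw [fAlg_mk] at hs
  have hFmem : Fpoly I d g ∈ SIdl (Fin n) p c0 c1 := (Ideal.Quotient.eq_zero_iff_mem).1 hs
  have hFred : Fpoly I d g ∈ polyRed p := by
    intro m hm j
    obtain ⟨m', hne, rfl⟩ := support_Fpoly I d g m hm
    rw [expMap_inl]
    by_cases hj : j ∈ I
    · rw [dif_pos hj]
      have h1 : m' (Sum.inl ⟨j, hj⟩) < pRes p d I ⟨j, hj⟩ := hgred m' hne ⟨j, hj⟩
      calc d j * m' (Sum.inl ⟨j, hj⟩) < d j * pRes p d I ⟨j, hj⟩ :=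
            mul_lt_mul_of_pos_left h1 (lt_of_lt_of_le one_pos (hd1 j hj))
        _ = p j := Nat.mul_div_cancel' (hd j hj)
    · rw [dif_neg hj]
      exact lt_of_lt_of_le two_pos (hp j)
  have hF0 := key_indep p c0 c1 hppos hnz _ hFmem hFred
  have hg0 : g = 0 := by
    apply MvPolynomial.ext
    intro m₀
    have := congrArg (coeff (expMap I d m₀)) hF0
    rw [coeff_Fpoly I d hd1] at this
    simpa using this
  rw [hg0, map_zero]

lemma fAlg_image (hp : ∀ i, 2 ≤ p i) (hd1 : ∀ i ∈ I, 1 ≤ d i)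
    (y : LGroup ↥I (pRes p d I)) :
    ⇑(fAlg p c0 c1 I d hd) '' ↑(SCompA (pRes p d I) (cRes c0 I) (cRes c1 I) y)
      = ↑(SCompA p c0 c1 (phiMap p I d hd y)) := by
  have hppos : ∀ j, p j ≠ 0 := fun j => by have := hp j; omega
  apply Set.Subset.antisymm
  · rintro s ⟨s', hs', rfl⟩
    obtain ⟨g, hg, rfl⟩ := hs'
    refine ⟨Fpoly I d g, ?_, rfl⟩
    intro m hm
    obtain ⟨m', hne, rfl⟩ := support_Fpoly I d g m hm
    rw [wtA_expMap p I d hd, hg m' hne]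
  · intro s hs
    rw [SCompA_eq_map p c0 c1 hppos] at hs
    obtain ⟨h, ⟨hhred, hhwt⟩, rfl⟩ := hs
    set g' : SPoly ↥I := ∑ m ∈ h.support, (coeff m h) • monomial (invExp I d m) 1 with hg'
    have hNF : ∀ m ∈ h.support,
        expMap I d (invExp I d m) = m ∧ wtA (pRes p d I) (invExp I d m) = y := fun m hm =>
      NF p I d hd hp hd1 y m (fun j => hhred m (mem_support_iff.1 hm) j)
        (hhwt m (mem_support_iff.1 hm))
    have hFg' : Fpoly I d g' = h := by
      rw [hg', map_sum]
      rw [Finset.sum_congr rfl (fun m (hm : m ∈ h.support) => by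
        rw [map_smul, Fpoly_monomial, (hNF m hm).1])]
      rw [Finset.sum_congr rfl (fun m (_ : m ∈ h.support) => by
        rw [smul_monomial, smul_eq_mul, mul_one])]
      exact support_sum_monomial_coeff h
    refine ⟨Ideal.Quotient.mkₐ ℂ _ g', ⟨g', ?_, rfl⟩, ?_⟩
    · intro m₀ hm₀
      rw [hg', coeff_sum] at hm₀
      obtain ⟨m, hm, hne⟩ := Finset.exists_ne_zero_of_sum_ne_zero hm₀
      rw [coeff_smul, smul_eq_mul, coeff_monomial] at hne
      by_cases he : invExp I d m = m₀
      · rw [← he]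
        exact (hNF m hm).2
      · rw [if_neg he, mul_zero] at hne
        exact absurd rfl hne
    · show fAlg p c0 c1 I d hd (Ideal.Quotient.mkₐ ℂ _ g') = _
      rw [Ideal.Quotient.mkₐ_eq_mk, fAlg_mk, hFg']
      rfl

end FAlg

/-- Changing parameters: for `I ⊆ {1,…,n}` and divisors `dᵢ ∣ pᵢ`
(`i ∈ I`), with `p′ᵢ := pᵢ/dᵢ` there are compatible injections `ι : L′ → L` and
`f : S′ → S` identifying the homogeneous components, and for suitable `x` the map `f`
restricts to a `ℤ`-graded isomorphism `(S′)^{x′} ≅ S^x`. -/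
theorem change_of_parameters (n : ℕ) (hn : 1 ≤ n) (p : Fin n → ℕ) (hp : ∀ i, 2 ≤ p i)
    (c0 c1 : Fin n → ℂ) (hnz : ∀ i, (c0 i, c1 i) ≠ (0, 0))
    (hdist : ∀ i j : Fin n, i ≠ j → c0 i * c1 j ≠ c1 i * c0 j)
    (I : Finset (Fin n)) (d : Fin n → ℕ)
    (hd : ∀ i ∈ I, d i ∣ p i) (hd1 : ∀ i ∈ I, 1 ≤ d i) :
    ∃ (φ : LGroup ↥I (pRes p d I) →+ LGroup (Fin n) p)
      (f : SAlg ↥I (pRes p d I) (cRes c0 I) (cRes c1 I) →ₐ[ℂ] SAlg (Fin n) p c0 c1),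
      Function.Injective φ ∧
      (∀ i : ↥I, φ (egen (pRes p d I) i) = d i.1 • egen p i.1) ∧
      φ (cgen (pRes p d I)) = cgen p ∧
      Function.Injective f ∧
      (∀ i : ↥I,
        f (Ideal.Quotient.mk (SIdl ↥I (pRes p d I) (cRes c0 I) (cRes c1 I))
            (X (Sum.inl i))) =
          Ideal.Quotient.mk (SIdl (Fin n) p c0 c1) (X (Sum.inl i.1)) ^ d i.1) ∧
      (∀ j : Fin 2,
        f (Ideal.Quotient.mk (SIdl ↥I (pRes p d I) (cRes c0 I) (cRes c1 I))
            (X (Sum.inr j))) =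
          Ideal.Quotient.mk (SIdl (Fin n) p c0 c1) (X (Sum.inr j))) ∧
      (∀ y : LGroup ↥I (pRes p d I),
        f '' ↑(SCompA (pRes p d I) (cRes c0 I) (cRes c1 I) y) =
          ↑(SCompA p c0 c1 (φ y))) ∧
      (∀ (x : LGroup (Fin n) p) (a : Fin n → ℕ) (aZ : ℤ),
        (∀ i, a i < p i) → (∀ i, i ∉ I → a i = 0) → (∀ i ∈ I, d i ∣ a i) →
        x = (∑ i, a i • egen p i) + aZ • cgen p →
        ∀ k : ℤ,
          f '' ↑(SCompA (pRes p d I) (cRes c0 I) (cRes c1 I)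
              (k • ((∑ i : ↥I, (a i.1 / d i.1) • egen (pRes p d I) i) +
                aZ • cgen (pRes p d I)))) =
            ↑(SCompA p c0 c1 (k • x))) := by
  refine ⟨phiMap p I d hd, fAlg p c0 c1 I d hd,
    phiMap_injective p I d hd hp hd1,
    fun i => phiMap_egen p I d hd i,
    phiMap_cgen p I d hd,
    fAlg_injective p c0 c1 I d hd hp hd1 hnz,
    ?_, ?_, ?_, ?_⟩
  · intro i
    rw [fAlg_mk, Fpoly_X_inl, map_pow]
  · intro j
    rw [fAlg_mk, Fpoly_X_inr]
  · intro y
    exact fAlg_image p c0 c1 I d hd hp hd1 y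
  · intro x a aZ hlt hoff hdvd hx k
    have hy : phiMap p I d hd ((∑ i : ↥I, (a i.1 / d i.1) • egen (pRes p d I) i)
        + aZ • cgen (pRes p d I)) = x := by
      rw [map_add, map_zsmul, map_sum, phiMap_cgen]
      have hterm : ∀ i : ↥I,
          phiMap p I d hd ((a i.1 / d i.1) • egen (pRes p d I) i) = a i.1 • egen p i.1 := by
        intro i
        rw [map_nsmul, phiMap_egen, smul_smul, Nat.div_mul_cancel (hdvd i.1 i.2)]
      rw [Finset.sum_congr rfl (fun i (_ : i ∈ (Finset.univ : Finset ↥I)) => hterm i)]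
      rw [sum_subtype_ext I (fun j => a j • egen p j)
        (fun j hj => by rw [hoff j hj]; exact zero_nsmul _)]
      exact hx.symm
    rw [← hy, ← map_zsmul]
    exact fAlg_image p c0 c1 I d hd hp hd1 _
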